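/- Assume 0 ≤ r < 1 and 0 ≤ α̃ < 1, and let z ∈ (0,1]. Then the series Σ_{k=1}^{∞} [Σ_{j=0}^{k−1} r^j α̃^{k−1−j}]·[μ_b·(μ_b z/(1 − μ̄_b z))^k + μ̄_b·(μ_b z/(1 − μ̄_b z))^{k+1}] converges and its sum equals μ_b² z / ((1 − μ̄_b z − μ_b α̃ z)(1 − μ̄_b z − μ_b r z)). -/

import Mathlib

/-- For 0 ≤ r < 1, 0 ≤ α̃ < 1 and z ∈ (0,1], the series
Σ_{k≥1} [Σ_{j<k} r^j α̃^{k−1−j}]·[μ_b B(z)^k + μ̄_b B(z)^{k+1}], B(z) = μ_b z/(1−μ̄_b z),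
converges to μ_b² z / ((1 − μ̄_b z − μ_b α̃ z)(1 − μ̄_b z − μ_b r z)). -/
theorem stmt_16
    (μb r al : ℝ) (hμb : μb ∈ Set.Ioo (0:ℝ) 1)
    (hr0 : 0 ≤ r) (hr1 : r < 1) (hal0 : 0 ≤ al) (hal1 : al < 1)
    (z : ℝ) (hz : z ∈ Set.Ioc (0:ℝ) 1) :
    Summable (fun k : ℕ =>
      (∑ j ∈ Finset.range k, r ^ j * al ^ (k - 1 - j)) *
        (μb * (μb * z / (1 - (1 - μb) * z)) ^ k +
          (1 - μb) * (μb * z / (1 - (1 - μb) * z)) ^ (k + 1))) ∧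
    (∑' k : ℕ,
      (∑ j ∈ Finset.range k, r ^ j * al ^ (k - 1 - j)) *
        (μb * (μb * z / (1 - (1 - μb) * z)) ^ k +
          (1 - μb) * (μb * z / (1 - (1 - μb) * z)) ^ (k + 1)))
      = μb ^ 2 * z / ((1 - (1 - μb) * z - μb * al * z) * (1 - (1 - μb) * z - μb * r * z)) := by
  obtain ⟨hμ0, hμ1⟩ := hμb
  obtain ⟨hz0, hz1⟩ := hz
  set D : ℝ := 1 - (1 - μb) * z with hD
  have hD0 : 0 < D := by simp only [hD]; nlinarith
  set x : ℝ := μb * z / D with hx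
  have hx0 : 0 < x := div_pos (by positivity) hD0
  have hx1 : x ≤ 1 := by
    rw [hx, div_le_one hD0]; simp only [hD]; nlinarith
  have hrx0 : 0 ≤ r * x := mul_nonneg hr0 hx0.le
  have halx0 : 0 ≤ al * x := mul_nonneg hal0 hx0.le
  have hrx : r * x < 1 := lt_of_le_of_lt (by nlinarith) hr1
  have halx : al * x < 1 := lt_of_le_of_lt (by nlinarith) hal1
  have hfn : Summable (fun n : ℕ => ‖(r * x) ^ n‖) := by
    simp only [norm_pow, Real.norm_eq_abs, abs_of_nonneg hrx0]
    exact summable_geometric_of_lt_one hrx0 hrx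
  have hgn : Summable (fun n : ℕ => ‖(al * x) ^ n‖) := by
    simp only [norm_pow, Real.norm_eq_abs, abs_of_nonneg halx0]
    exact summable_geometric_of_lt_one halx0 halx
  have hG := hasSum_sum_range_mul_of_summable_norm hfn hgn
  have hH := hG.mul_left ((μb + (1 - μb) * x) * x)
  set F : ℕ → ℝ := fun k =>
      (∑ j ∈ Finset.range k, r ^ j * al ^ (k - 1 - j)) *
        (μb * x ^ k + (1 - μb) * x ^ (k + 1)) with hF
  have hF0 : F 0 = 0 := by simp [hF]
  have hFs : ∀ n : ℕ, F (n + 1) =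
      (μb + (1 - μb) * x) * x *
        ∑ k ∈ Finset.range (n + 1), (r * x) ^ k * (al * x) ^ (n - k) := by
    intro n
    have hsum : ∑ k ∈ Finset.range (n + 1), (r * x) ^ k * (al * x) ^ (n - k)
        = x ^ n * ∑ k ∈ Finset.range (n + 1), r ^ k * al ^ (n - k) := by
      rw [Finset.mul_sum]
      refine Finset.sum_congr rfl fun k hk => ?_
      have hk' : k ≤ n := Nat.lt_succ_iff.mp (Finset.mem_range.mp hk)
      have : x ^ k * x ^ (n - k) = x ^ n := by
        rw [← pow_add, Nat.add_sub_cancel' hk']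
      rw [mul_pow, mul_pow]
      calc r ^ k * x ^ k * (al ^ (n - k) * x ^ (n - k))
          = (x ^ k * x ^ (n - k)) * (r ^ k * al ^ (n - k)) := by ring
        _ = x ^ n * (r ^ k * al ^ (n - k)) := by rw [this]
    rw [hsum, hF]
    simp only [Nat.add_sub_cancel]
    ring
  have hHF : HasSum (fun n : ℕ => F (n + 1))
      ((μb + (1 - μb) * x) * x * ((∑' n : ℕ, (r * x) ^ n) * ∑' n : ℕ, (al * x) ^ n)) := by
    refine hH.congr_fun fun n => hFs n
  have hFs2 : HasSum F
      ((μb + (1 - μb) * x) * x * ((∑' n : ℕ, (r * x) ^ n) * ∑' n : ℕ, (al * x) ^ n)) := by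
    have := (hasSum_nat_add_iff (f := F) 1).mp hHF
    simpa [hF0] using this
  have hval : (μb + (1 - μb) * x) * x * ((∑' n : ℕ, (r * x) ^ n) * ∑' n : ℕ, (al * x) ^ n)
      = μb ^ 2 * z / ((D - μb * al * z) * (D - μb * r * z)) := by
    rw [tsum_geometric_of_lt_one hrx0 hrx, tsum_geometric_of_lt_one halx0 halx]
    have h1 : 0 < D - μb * r * z := by nlinarith
    have h2 : 0 < D - μb * al * z := by nlinarith
    have h3 : 1 - r * x = (D - μb * r * z) / D := by
      rw [hx]; field_simp; try ring
    have h4 : 1 - al * x = (D - μb * al * z) / D := by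
      rw [hx]; field_simp; try ring
    rw [h3, h4, hx]
    field_simp
    rw [hD]
    ring
  constructor
  · exact hFs2.summable
  · rw [hFs2.tsum_eq, hval]
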